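/- (a) For every z ∈ ℂ \ Γ, the polynomial Q_z has exactly one root of magnitude strictly greater than 1: there exists a unique r ∈ ℂ with Q_z(r) = 0 and |r| > 1. (b) For every z in the topological interior of Γ, every root r of Q_z satisfies |r| < 1. -/

import Mathlib

/-- Auxiliary: `|a^k - b^k| ≤ k * |a - b|` when `|a|, |b| ≤ 1`. -/
lemma stmt4_aux_pow_sub (a b : ℂ) (ha : ‖a‖ ≤ 1) (hb : ‖b‖ ≤ 1) :
    ∀ k : ℕ, ‖a ^ k - b ^ k‖ ≤ k * ‖a - b‖ := by
  intro k
  induction k with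
  | zero => simp
  | succ n ih =>
    have hsplit : a ^ (n + 1) - b ^ (n + 1) = a ^ n * (a - b) + b * (a ^ n - b ^ n) := by
      ring
    rw [hsplit]
    have e1 : ‖a‖ ^ n ≤ 1 := pow_le_one₀ (norm_nonneg a) ha
    have e2 : 0 ≤ ‖a - b‖ := norm_nonneg _
    have e3 : 0 ≤ ‖a ^ n - b ^ n‖ := norm_nonneg _
    have e4 : 0 ≤ ‖b‖ := norm_nonneg _
    calc ‖a ^ n * (a - b) + b * (a ^ n - b ^ n)‖
        ≤ ‖a ^ n * (a - b)‖ + ‖b * (a ^ n - b ^ n)‖ :=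
          norm_add_le _ _
      _ = ‖a‖ ^ n * ‖a - b‖
            + ‖b‖ * ‖a ^ n - b ^ n‖ := by
          rw [norm_mul, norm_mul, norm_pow]
      _ ≤ (n + 1 : ℕ) * ‖a - b‖ := by
          push_cast
          linarith [mul_le_of_le_one_left e2 e1, mul_le_of_le_one_left e3 hb, ih]

theorem stmt_4
    (m : ℕ) (hm : 2 ≤ m)
    (p : ℕ → ℝ)
    (hp_nonneg : ∀ j, 0 ≤ p j)
    (hp_sum : ∑ j ∈ Finset.range (m + 1), p j = 1)
    (hp0 : 0 < p 0)
    (hp1 : p 1 = 0)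
    (hmean : ∑ j ∈ Finset.range (m + 1), (1 - (j : ℝ)) * p j = 0)
    (Q : ℂ → ℂ → ℂ)
    (hQ : ∀ z r : ℂ, Q z r = r ^ m - z / (p 0 : ℂ) * r ^ (m - 1)
      + ∑ j ∈ Finset.Icc 2 m, ((p j / p 0 : ℝ) : ℂ) * r ^ (m - j))
    (Γ : Set ℂ)
    (hΓ : Γ = {z : ℂ | ∀ r : ℂ, 1 < ‖r‖ →
      z ≠ ∑ j ∈ Finset.range (m + 1), (p j : ℂ) * r ^ ((1 : ℤ) - (j : ℤ))}) :
    (∀ z : ℂ, z ∉ Γ → ∃! r : ℂ, Q z r = 0 ∧ 1 < ‖r‖) ∧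
    (∀ z ∈ interior Γ, ∀ r : ℂ, Q z r = 0 → ‖r‖ < 1) := by
  have hp0C : (p 0 : ℂ) ≠ 0 := by
    exact_mod_cast ne_of_gt hp0
  set ψ : ℂ → ℂ := fun r => ∑ j ∈ Finset.range (m + 1), (p j : ℂ) * r ^ ((1 : ℤ) - (j : ℤ))
    with hψ
  -- decomposition of the index set
  have hset : Finset.range (m + 1) = insert 0 (insert 1 (Finset.Icc 2 m)) := by
    ext j
    simp only [Finset.mem_range, Finset.mem_insert, Finset.mem_Icc]
    omega
  have h0ni : (0 : ℕ) ∉ insert 1 (Finset.Icc 2 m) := by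
    simp only [Finset.mem_insert, Finset.mem_Icc]; omega
  have h1ni : (1 : ℕ) ∉ Finset.Icc 2 m := by
    simp only [Finset.mem_Icc]; omega
  -- ψ rewritten with inverse powers
  have hψ_eq : ∀ r : ℂ, r ≠ 0 →
      ψ r = (p 0 : ℂ) * r + ∑ j ∈ Finset.Icc 2 m, (p j : ℂ) * (r⁻¹) ^ (j - 1) := by
    intro r hr
    have hterm : ∀ j ∈ Finset.Icc 2 m,
        (p j : ℂ) * r ^ ((1 : ℤ) - (j : ℤ)) = (p j : ℂ) * (r⁻¹) ^ (j - 1) := by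
      intro j hj
      simp only [Finset.mem_Icc] at hj
      congr 1
      have he : (1 : ℤ) - (j : ℤ) = -((j - 1 : ℕ) : ℤ) := by
        push_cast [Nat.cast_sub (by omega : 1 ≤ j)]; ring
      rw [he, zpow_neg, zpow_natCast, inv_pow]
    rw [hψ]
    simp only
    rw [hset, Finset.sum_insert h0ni, Finset.sum_insert h1ni, Finset.sum_congr rfl hterm]
    have h1 : (p 1 : ℂ) = 0 := by exact_mod_cast hp1
    rw [h1]
    simp
  -- the key identity  p0 * Q z r = r^(m-1) * (ψ r - z)
  have hid : ∀ z r : ℂ, r ≠ 0 → (p 0 : ℂ) * Q z r = r ^ (m - 1) * (ψ r - z) := by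
    intro z r hr
    have hpow : ∀ j ∈ Finset.range (m + 1),
        r ^ (m - 1) * ((p j : ℂ) * r ^ ((1 : ℤ) - (j : ℤ))) = (p j : ℂ) * r ^ (m - j) := by
      intro j hj
      simp only [Finset.mem_range] at hj
      have : r ^ ((1 : ℤ) - (j : ℤ)) * r ^ (((m - 1 : ℕ) : ℤ)) = r ^ (((m - j : ℕ) : ℤ)) := by
        rw [← zpow_add₀ hr]
        congr 1
        push_cast [Nat.cast_sub (by omega : 1 ≤ m), Nat.cast_sub (by omega : j ≤ m)]
        ring
      rw [zpow_natCast, zpow_natCast] at this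
      rw [mul_comm, mul_assoc, this]
    have hexp : r ^ (m - 1) * ψ r = ∑ j ∈ Finset.range (m + 1), (p j : ℂ) * r ^ (m - j) := by
      rw [hψ]
      simp only
      rw [Finset.mul_sum]
      exact Finset.sum_congr rfl hpow
    have hsum : ∑ j ∈ Finset.range (m + 1), (p j : ℂ) * r ^ (m - j)
        = (p 0 : ℂ) * r ^ m + ∑ j ∈ Finset.Icc 2 m, (p j : ℂ) * r ^ (m - j) := by
      rw [hset, Finset.sum_insert h0ni, Finset.sum_insert h1ni]
      have h1 : (p 1 : ℂ) = 0 := by exact_mod_cast hp1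
      rw [h1]
      simp
    rw [mul_sub, hexp, hsum, hQ]
    rw [mul_add, mul_sub]
    have hz : (p 0 : ℂ) * (z / (p 0 : ℂ) * r ^ (m - 1)) = z * r ^ (m - 1) := by
      field_simp
    rw [hz, Finset.mul_sum]
    have hterm : ∀ j ∈ Finset.Icc 2 m,
        (p 0 : ℂ) * (((p j / p 0 : ℝ) : ℂ) * r ^ (m - j)) = (p j : ℂ) * r ^ (m - j) := by
      intro j hj
      push_cast
      field_simp
    rw [Finset.sum_congr rfl hterm]
    ring
  -- equivalence: for r ≠ 0, Q z r = 0 ↔ ψ r = z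
  have hiff : ∀ z r : ℂ, r ≠ 0 → (Q z r = 0 ↔ ψ r = z) := by
    intro z r hr
    constructor
    · intro h
      have h2 := hid z r hr
      rw [h, mul_zero] at h2
      have hrp : r ^ (m - 1) ≠ 0 := pow_ne_zero _ hr
      have h3 := (mul_eq_zero.mp h2.symm).resolve_left hrp
      exact sub_eq_zero.mp h3
    · intro h
      have h2 := hid z r hr
      rw [h, sub_self, mul_zero] at h2
      exact (mul_eq_zero.mp h2).resolve_left hp0C
  -- p0 = ∑_{j=2}^m (j-1) p j
  have hp0sum : ∑ j ∈ Finset.Icc 2 m, ((j : ℝ) - 1) * p j = p 0 := by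
    rw [hset, Finset.sum_insert h0ni, Finset.sum_insert h1ni] at hmean
    rw [hp1] at hmean
    have h : ∑ j ∈ Finset.Icc 2 m, ((j : ℝ) - 1) * p j
        = -∑ j ∈ Finset.Icc 2 m, (1 - (j : ℝ)) * p j := by
      rw [← Finset.sum_neg_distrib]
      apply Finset.sum_congr rfl
      intro j _; ring
    rw [h]
    simp only [Nat.cast_zero, sub_zero, one_mul, Nat.cast_one, sub_self, zero_mul,
      add_zero] at hmean
    linarith
  -- injectivity of ψ on the exterior of the unit disk
  have hinj : ∀ r₁ r₂ : ℂ, 1 < ‖r₁‖ → 1 < ‖r₂‖ →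
      ψ r₁ = ψ r₂ → r₁ = r₂ := by
    intro r₁ r₂ h1 h2 heq
    by_contra hne
    have hr1 : r₁ ≠ 0 := by
      intro h; rw [h] at h1; simp at h1; linarith
    have hr2 : r₂ ≠ 0 := by
      intro h; rw [h] at h2; simp at h2; linarith
    rw [hψ_eq r₁ hr1, hψ_eq r₂ hr2] at heq
    have hsum_eq : ∑ j ∈ Finset.Icc 2 m, (p j : ℂ) * ((r₁⁻¹) ^ (j - 1) - (r₂⁻¹) ^ (j - 1))
        = ∑ j ∈ Finset.Icc 2 m, (p j : ℂ) * (r₁⁻¹) ^ (j - 1)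
          - ∑ j ∈ Finset.Icc 2 m, (p j : ℂ) * (r₂⁻¹) ^ (j - 1) := by
      rw [← Finset.sum_sub_distrib]
      exact Finset.sum_congr rfl (fun j _ => by ring)
    have hkey : (p 0 : ℂ) * (r₁ - r₂)
        = -∑ j ∈ Finset.Icc 2 m, (p j : ℂ) * ((r₁⁻¹) ^ (j - 1) - (r₂⁻¹) ^ (j - 1)) := by
      rw [hsum_eq]
      linear_combination heq
    have hdpos : 0 < ‖r₁ - r₂‖ := by
      rw [norm_pos_iff]; exact sub_ne_zero.mpr hne
    have hainv : ‖r₁⁻¹‖ ≤ 1 := by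
      rw [norm_inv]
      exact le_of_lt (inv_lt_one_of_one_lt₀ h1)
    have hbinv : ‖r₂⁻¹‖ ≤ 1 := by
      rw [norm_inv]
      exact le_of_lt (inv_lt_one_of_one_lt₀ h2)
    -- |r₁⁻¹ - r₂⁻¹| < |r₁ - r₂|
    have hinvlt : ‖r₁⁻¹ - r₂⁻¹‖ < ‖r₁ - r₂‖ := by
      have hform : r₁⁻¹ - r₂⁻¹ = (r₂ - r₁) / (r₁ * r₂) := by
        field_simp
      rw [hform, norm_div, norm_mul]
      have habs : ‖r₂ - r₁‖ = ‖r₁ - r₂‖ := by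
        rw [← norm_neg]; congr 1; ring
      rw [habs]
      have hgt1 : 1 < ‖r₁‖ * ‖r₂‖ := by
        nlinarith
      rw [div_lt_iff₀ (by linarith : (0:ℝ) < ‖r₁‖ * ‖r₂‖)]
      nlinarith
    -- bound the sum
    have hbound : ‖(p 0 : ℂ) * (r₁ - r₂)‖ ≤ p 0 * ‖r₁⁻¹ - r₂⁻¹‖ := by
      rw [hkey, norm_neg]
      calc ‖∑ j ∈ Finset.Icc 2 m,
              (p j : ℂ) * ((r₁⁻¹) ^ (j - 1) - (r₂⁻¹) ^ (j - 1))‖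
          ≤ ∑ j ∈ Finset.Icc 2 m,
              ‖(p j : ℂ) * ((r₁⁻¹) ^ (j - 1) - (r₂⁻¹) ^ (j - 1))‖ :=
            norm_sum_le _ _
        _ ≤ ∑ j ∈ Finset.Icc 2 m, ((j : ℝ) - 1) * p j * ‖r₁⁻¹ - r₂⁻¹‖ := by
            apply Finset.sum_le_sum
            intro j hj
            simp only [Finset.mem_Icc] at hj
            rw [norm_mul, Complex.norm_real, Real.norm_eq_abs, abs_of_nonneg (hp_nonneg j)]
            have hb := stmt4_aux_pow_sub r₁⁻¹ r₂⁻¹ hainv hbinv (j - 1)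
            have hcast : ((j - 1 : ℕ) : ℝ) = (j : ℝ) - 1 := by
              push_cast [Nat.cast_sub (by omega : 1 ≤ j)]; ring
            calc p j * ‖(r₁⁻¹) ^ (j - 1) - (r₂⁻¹) ^ (j - 1)‖
                ≤ p j * (((j - 1 : ℕ) : ℝ) * ‖r₁⁻¹ - r₂⁻¹‖) :=
                  mul_le_mul_of_nonneg_left hb (hp_nonneg j)
              _ = ((j : ℝ) - 1) * p j * ‖r₁⁻¹ - r₂⁻¹‖ := by
                  rw [hcast]; ring
        _ = p 0 * ‖r₁⁻¹ - r₂⁻¹‖ := by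
            rw [← Finset.sum_mul, hp0sum]
    rw [norm_mul, Complex.norm_real, Real.norm_eq_abs, abs_of_nonneg (le_of_lt hp0)] at hbound
    nlinarith
  constructor
  · -- part (a)
    intro z hz
    rw [hΓ] at hz
    simp only [Set.mem_setOf_eq, not_forall] at hz
    obtain ⟨r, hr, hzr⟩ := hz
    rw [not_ne_iff] at hzr
    have hrne : r ≠ 0 := by
      intro h; rw [h] at hr; simp at hr; linarith
    have hψrz : ψ r = z := by
      rw [hψ]; exact hzr.symm
    refine ⟨r, ⟨(hiff z r hrne).mpr hψrz, hr⟩, ?_⟩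
    rintro r' ⟨hQ', hr'⟩
    have hr'ne : r' ≠ 0 := by
      intro h; rw [h] at hr'; simp at hr'; linarith
    have h' : ψ r' = z := (hiff z r' hr'ne).mp hQ'
    exact hinj r' r hr' hr (h'.trans hψrz.symm)
  · -- part (b)
    intro z hz r hQr
    by_contra hge
    push_neg at hge
    have hrne : r ≠ 0 := by
      intro h; rw [h] at hge; simp at hge; linarith
    have hψr : ψ r = z := (hiff z r hrne).mp hQr
    have hzΓ : z ∈ Γ := interior_subset hz
    rcases lt_or_eq_of_le hge with hlt | heq
    · -- |r| > 1: direct contradiction with z ∈ Γ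
      rw [hΓ] at hzΓ
      exact hzΓ r hlt (by rw [← hψr])
    · -- |r| = 1: z is a limit of points outside Γ
      have habs : ‖r‖ = 1 := heq.symm
      set x : ℕ → ℂ := fun n => ((1 + 1 / (n + 1) : ℝ) : ℂ) * r with hx
      have hxabs : ∀ n, 1 < ‖x n‖ := by
        intro n
        rw [hx]
        simp only [norm_mul, Complex.norm_real, Real.norm_eq_abs, habs, mul_one]
        rw [abs_of_pos (by positivity)]
        have hpos : (0:ℝ) < 1 / (n + 1) := by positivity
        linarith
      have hxne : ∀ n, ψ (x n) ∉ Γ := by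
        intro n hmem
        rw [hΓ] at hmem
        exact hmem (x n) (hxabs n) (by rw [hψ])
      have htend : Filter.Tendsto (fun n => ψ (x n)) Filter.atTop (nhds z) := by
        have hx_tend : Filter.Tendsto x Filter.atTop (nhds r) := by
          have h1 : Filter.Tendsto (fun n : ℕ => (1 + 1 / (n + 1) : ℝ)) Filter.atTop
              (nhds 1) := by
            have := Filter.Tendsto.const_add (1 : ℝ)
              tendsto_one_div_add_atTop_nhds_zero_nat
            simpa using this
          have h2 : Filter.Tendsto (fun n : ℕ => ((1 + 1 / (n + 1) : ℝ) : ℂ)) Filter.atTop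
              (nhds 1) := by
            have := (Complex.continuous_ofReal.tendsto 1).comp h1
            simpa [Function.comp_def] using this
          have h3 := h2.mul (tendsto_const_nhds (x := r))
          rw [one_mul] at h3
          exact h3
        have hcont : ContinuousAt ψ r := by
          rw [hψ]
          apply tendsto_finset_sum
          intro j _
          exact (continuousAt_const.mul (continuousAt_zpow₀ r _ (Or.inl hrne)))
        rw [← hψr]
        exact hcont.tendsto.comp hx_tend
      have hcl : z ∈ closure Γᶜ :=
        mem_closure_of_tendsto htend (Filter.Eventually.of_forall hxne)
      rw [closure_compl] at hcl
      exact hcl hz
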